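/- Let m ≥ 3 be an integer and ε ∈ {1, −1}. Then 2^{2m+1} + ε·2^{m+1} + 1 is not a power of 5. -/

import Mathlib

open FiniteMultiplicity

lemma auxpow (m : ℕ) (hm : 3 ≤ m) : 2 * m + 2 ≤ 2 ^ m := by
  induction m with
  | zero => omega
  | succ n ih =>
    rcases Nat.lt_or_ge n 3 with h | h
    · interval_cases n <;> omega
    · have := ih (by omega)
      rw [pow_succ]; omega

lemma aux8 (m k : ℕ) (hm : 3 ≤ m) (hk : 1 ≤ k)
    (h : (2 : ℤ) ^ (m + 1) ∣ 5 ^ k - 1) : 2 ^ (m - 1) ∣ k := by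
  have h4 : (4 : ℤ) ∣ 5 - 1 := by norm_num
  have h2 : ¬ (2 : ℤ) ∣ 5 := by decide
  have hmul := Int.two_pow_sub_pow' (x := 5) (y := 1) k h4 h2
  simp only [one_pow] at hmul
  have hle : (↑(m + 1) : ℕ∞) ≤ emultiplicity (2 : ℤ) (5 ^ k - 1) :=
    pow_dvd_iff_le_emultiplicity.mp h
  rw [hmul] at hle
  have h51 : emultiplicity (2 : ℤ) (5 - 1) = 2 := by
    have : (5 - 1 : ℤ) = 2 ^ 2 := by norm_num
    rw [this, emultiplicity_pow_self_of_prime Int.prime_two]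
    rfl
  rw [h51] at hle
  have hfin : FiniteMultiplicity (2 : ℤ) (k : ℤ) :=
    Int.finiteMultiplicity_iff.mpr ⟨by norm_num, by exact_mod_cast Nat.one_le_iff_ne_zero.mp hk⟩
  rw [hfin.emultiplicity_eq_multiplicity] at hle
  have hle' : m + 1 ≤ 2 + multiplicity (2 : ℤ) (k : ℤ) := by exact_mod_cast hle
  have htle : m - 1 ≤ multiplicity (2 : ℤ) (k : ℤ) := by omega
  have hdvd : (2 : ℤ) ^ (m - 1) ∣ (k : ℤ) := by
    refine pow_dvd_iff_le_emultiplicity.mpr ?_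
    rw [hfin.emultiplicity_eq_multiplicity]
    exact_mod_cast htle
  exact_mod_cast hdvd

theorem stmt8 (m : ℕ) (hm : 3 ≤ m) (ε : ℤ) (hε : ε = 1 ∨ ε = -1) :
    ¬ ∃ k : ℕ, 1 ≤ k ∧ (2 : ℤ) ^ (2 * m + 1) + ε * 2 ^ (m + 1) + 1 = 5 ^ k := by
  rintro ⟨k, hk, heq⟩
  -- 2^(m+1) ∣ 5^k - 1
  have hdvd : (2 : ℤ) ^ (m + 1) ∣ 5 ^ k - 1 := by
    rw [← heq]
    have e : (2 : ℤ) ^ (2 * m + 1) = 2 ^ (m + 1) * 2 ^ m := by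
      rw [← pow_add]; congr 1; omega
    have : (2 : ℤ) ^ (2 * m + 1) + ε * 2 ^ (m + 1) + 1 - 1
        = 2 ^ (m + 1) * (2 ^ m + ε) := by rw [e]; ring
    rw [this]
    exact Dvd.intro _ rfl
  have hkdvd : 2 ^ (m - 1) ∣ k := aux8 m k hm hk hdvd
  have hkge : 2 ^ (m - 1) ≤ k := Nat.le_of_dvd (by omega) hkdvd
  -- size bound
  have hpow : 2 * m + 2 ≤ 2 ^ m := auxpow m hm
  have h1 : (5 : ℤ) ^ k ≥ 5 ^ (2 ^ (m - 1)) := pow_le_pow_right₀ (by norm_num) hkge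
  have h2 : (5 : ℤ) ^ (2 ^ (m - 1)) > 4 ^ (2 ^ (m - 1)) := by
    apply pow_lt_pow_left₀ (by norm_num) (by norm_num)
    positivity
  have h3 : (4 : ℤ) ^ (2 ^ (m - 1)) = 2 ^ (2 ^ m) := by
    have : (4 : ℤ) = 2 ^ 2 := by norm_num
    rw [this, ← pow_mul]
    congr 1
    have hm1 : m - 1 + 1 = m := by omega
    conv_rhs => rw [← hm1]
    rw [pow_succ]; ring
  have h4 : (2 : ℤ) ^ (2 ^ m) ≥ 2 ^ (2 * m + 2) := pow_le_pow_right₀ (by norm_num) hpow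
  have h5 : (2 : ℤ) ^ (2 * m + 1) + ε * 2 ^ (m + 1) + 1 < 2 ^ (2 * m + 2) := by
    have hε2 : ε * 2 ^ (m + 1) ≤ 2 ^ (m + 1) := by
      rcases hε with h | h <;> subst h <;> nlinarith [pow_pos (by norm_num : (0:ℤ) < 2) (m + 1)]
    have hsmall : (2 : ℤ) ^ (m + 1) + 1 < 2 ^ (2 * m + 1) := by
      have h2m : (2 : ℤ) ^ (m + 2) ≤ 2 ^ (2 * m + 1) := pow_le_pow_right₀ (by norm_num) (by omega)
      have h0 : (2 : ℤ) ≤ 2 ^ (m + 1) := by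
        calc (2 : ℤ) = 2 ^ 1 := by ring
        _ ≤ _ := pow_le_pow_right₀ (by norm_num) (by omega)
      rw [pow_succ] at h2m
      linarith
    have : (2 : ℤ) ^ (2 * m + 2) = 2 ^ (2 * m + 1) + 2 ^ (2 * m + 1) := by rw [pow_succ]; ring
    linarith
  rw [heq] at h5
  linarith [h2, h1, h3 ▸ h4]
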